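/- Let N ≥ 1 and let A and D be real symmetric N×N matrices satisfying the Kalman rank condition rank(D, AD, …, A^{N−1}D) = N. Let Ã = A ⊗ I₄ and D̃ = D ⊗ I₄ be the 4N×4N Kronecker products of A and D with the 4×4 identity matrix (so that Ã has block entries a_{ij} I₄ and D̃ has block entries d_{ij} I₄). Then rank(D̃, ÃD̃, Ã²D̃, …, Ã^{4N−1}D̃) = 4N. -/
import Mathlib


open scoped Kronecker

/-- The Kalman matrix `(D, AD, A²D, …, A^{M−1}D)` of a pair of square matrices,
viewed as a matrix indexed by `n × (Fin M × n)` whose `(i, (k, j))` entry is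
`(A^k * D) i j`. -/
def kalmanMatrix {n : Type*} [Fintype n] [DecidableEq n] (M : ℕ)
    (A D : Matrix n n ℝ) : Matrix n (Fin M × n) ℝ :=
  fun i p => (A ^ (p.1 : ℕ) * D) i p.2

private lemma kron_one_pow {N : ℕ} (A : Matrix (Fin N) (Fin N) ℝ) (k : ℕ) :
    (A ⊗ₖ (1 : Matrix (Fin 4) (Fin 4) ℝ)) ^ k = (A ^ k) ⊗ₖ (1 : Matrix (Fin 4) (Fin 4) ℝ) := by
  induction k with
  | zero => simp [Matrix.one_kronecker_one]
  | succ k ih =>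
    rw [pow_succ, pow_succ, ih, ← Matrix.mul_kronecker_mul, Matrix.one_mul]

theorem stmt8 (N : ℕ) (hN : 1 ≤ N)
    (A D : Matrix (Fin N) (Fin N) ℝ) (hA : A.IsSymm) (hD : D.IsSymm)
    (hK : (kalmanMatrix N A D).rank = N) :
    (kalmanMatrix (4 * N) (A ⊗ₖ (1 : Matrix (Fin 4) (Fin 4) ℝ))
        (D ⊗ₖ (1 : Matrix (Fin 4) (Fin 4) ℝ))).rank = 4 * N := by
  classical
  set K := kalmanMatrix N A D with hKdef
  -- surjectivity of the small Kalman map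
  have hrange : LinearMap.range K.mulVecLin = ⊤ := by
    apply Submodule.eq_top_of_finrank_eq
    rw [← Matrix.rank, hK, Module.finrank_pi]
    simp
  have hsurj : ∀ w : Fin N → ℝ, ∃ v, K.mulVec v = w := by
    intro w
    have : w ∈ LinearMap.range K.mulVecLin := by rw [hrange]; trivial
    obtain ⟨v, hv⟩ := this
    exact ⟨v, hv⟩
  set K4 := kalmanMatrix (4 * N) (A ⊗ₖ (1 : Matrix (Fin 4) (Fin 4) ℝ))
      (D ⊗ₖ (1 : Matrix (Fin 4) (Fin 4) ℝ)) with hK4def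
  -- entry formula for the big Kalman matrix
  have hentry : ∀ (i : Fin N) (s : Fin 4) (k : Fin (4 * N)) (j : Fin N) (t : Fin 4),
      K4 (i, s) (k, (j, t)) = (A ^ (k : ℕ) * D) i j * (if s = t then 1 else 0) := by
    intro i s k j t
    have : (A ⊗ₖ (1 : Matrix (Fin 4) (Fin 4) ℝ)) ^ (k : ℕ) *
        (D ⊗ₖ (1 : Matrix (Fin 4) (Fin 4) ℝ)) =
        (A ^ (k : ℕ) * D) ⊗ₖ (1 : Matrix (Fin 4) (Fin 4) ℝ) := by
      rw [kron_one_pow, ← Matrix.mul_kronecker_mul, Matrix.one_mul]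
    simp only [hK4def, kalmanMatrix, this, Matrix.kroneckerMap_apply, Matrix.one_apply]
  -- surjectivity of the big Kalman map
  have hbig : LinearMap.range K4.mulVecLin = ⊤ := by
    rw [LinearMap.range_eq_top]
    intro w
    choose v hv using fun t : Fin 4 => hsurj (fun i => w (i, t))
    refine ⟨fun p => if h : (p.1 : ℕ) < N then v p.2.2 (⟨p.1, h⟩, p.2.1) else 0, ?_⟩
    funext is
    obtain ⟨i, s⟩ := is
    have key : K4.mulVec
        (fun p => if h : (p.1 : ℕ) < N then v p.2.2 (⟨p.1, h⟩, p.2.1) else 0) (i, s)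
        = K.mulVec (v s) i := by
      simp only [Matrix.mulVec, dotProduct, hKdef, kalmanMatrix]
      rw [Fintype.sum_prod_type, Fintype.sum_prod_type]
      set g : ℕ → ℝ := fun k => if h : k < N then
          ∑ j : Fin N, (A ^ k * D) i j * v s (⟨k, h⟩, j) else 0 with hg
      have hsum : ∀ k : Fin (4 * N),
          (∑ q : Fin N × Fin 4, K4 (i, s) (k, q) *
            (if h : (k : ℕ) < N then v q.2 (⟨k, h⟩, q.1) else 0))
          = g (k : ℕ) := by
        intro k
        rw [hg]
        by_cases h : (k : ℕ) < N
        · simp only [dif_pos h]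
          rw [Fintype.sum_prod_type, Finset.sum_comm]
          have : ∀ t : Fin 4, ∑ j : Fin N, K4 (i, s) (k, (j, t)) * v t (⟨k, h⟩, j)
              = if s = t then ∑ j : Fin N, (A ^ (k : ℕ) * D) i j * v s (⟨k, h⟩, j) else 0 := by
            intro t
            by_cases hst : s = t
            · subst hst
              simp only [if_pos rfl]
              refine Finset.sum_congr rfl fun j _ => ?_
              rw [hentry]; simp
            · simp only [if_neg hst]
              refine Finset.sum_eq_zero fun j _ => ?_
              rw [hentry, if_neg hst]; ring
          rw [Finset.sum_congr rfl (fun t _ => this t)]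
          simp
        · simp [h]
      have hR : ∀ k' : Fin N, (∑ j : Fin N, (A ^ (k' : ℕ) * D) i j * v s (k', j))
          = g (k' : ℕ) := by
        intro k'
        rw [hg]
        simp only [dif_pos k'.isLt, Fin.eta]
      rw [Finset.sum_congr rfl (fun k _ => hsum k),
        Finset.sum_congr rfl (fun k _ => hR k),
        Fin.sum_univ_eq_sum_range g, Fin.sum_univ_eq_sum_range g]
      refine (Finset.sum_subset (Finset.range_subset_range.mpr (by omega)) ?_).symm
      intro k _ hk
      rw [Finset.mem_range, not_lt] at hk
      rw [hg]
      exact dif_neg (by omega)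
    rw [Matrix.mulVecLin_apply, key, hv]
  have hle : K4.rank ≤ 4 * N := by
    have := K4.rank_le_card_height
    simpa using this.trans_eq (by simp [Fintype.card_prod]; ring)
  have hge : K4.rank = 4 * N := by
    rw [Matrix.rank, hbig, finrank_top, Module.finrank_pi]
    simp [Fintype.card_prod]; ring
  exact hge
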